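/- Let f ∈ L¹(ℝ^d), f ≠ 0, let ε > 0, and choose K > 1 and δ ∈ (0,1) with K < (1-δ)^{1/d}(1+ε). Let R' > 0 satisfy ∫_{B_{R'}(0)} |f| ≥ (1-δ)‖f‖₁ and set M = max{R'/(K-1), R'}. Then for every x with |x| > M and r_x/|x| ≥ ε, one has r_x/|x| ≤ K/(1-δ)^{1/d} < 1+ε. -/

import Mathlib

open MeasureTheory

noncomputable def contAvg (d : ℕ) (f : EuclideanSpace ℝ (Fin d) → ℝ) (r : ℝ)
    (x : EuclideanSpace ℝ (Fin d)) : ℝ :=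
  (∫ y in Metric.ball x r, |f y|) / (volume (Metric.ball x r)).toReal

noncomputable def contMax (d : ℕ) (f : EuclideanSpace ℝ (Fin d) → ℝ)
    (x : EuclideanSpace ℝ (Fin d)) : ℝ :=
  sSup ((fun r => contAvg d f r x) '' Set.Ioi (0 : ℝ))

noncomputable def contFreq (d : ℕ) (f : EuclideanSpace ℝ (Fin d) → ℝ)
    (x : EuclideanSpace ℝ (Fin d)) : ℝ :=
  sInf {r : ℝ | 0 < r ∧ contMax d f x = contAvg d f r x}

theorem stmt9 (d : ℕ) (f : EuclideanSpace ℝ (Fin d) → ℝ) (hf : Integrable f volume)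
    (hf0 : ¬ (f =ᵐ[volume] 0)) (ε K δ : ℝ) (hε : 0 < ε) (hK : 1 < K)
    (hδ0 : 0 < δ) (hδ1 : δ < 1)
    (hKδ : K < (1 - δ) ^ ((1 : ℝ) / d) * (1 + ε))
    (R' : ℝ) (hR' : 0 < R')
    (hmass : (1 - δ) * ∫ y, |f y| ≤
      ∫ y in Metric.ball (0 : EuclideanSpace ℝ (Fin d)) R', |f y|)
    (x : EuclideanSpace ℝ (Fin d)) (hx : max (R' / (K - 1)) R' < ‖x‖)
    (hratio : ε ≤ contFreq d f x / ‖x‖) :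
    contFreq d f x / ‖x‖ ≤ K / (1 - δ) ^ ((1 : ℝ) / d) ∧
      K / (1 - δ) ^ ((1 : ℝ) / d) < 1 + ε := by
  have hδ' : (0:ℝ) < 1 - δ := by linarith
  have hp : 0 < (1 - δ) ^ ((1 : ℝ) / d) := Real.rpow_pos_of_pos hδ' _
  have hp1 : (1 - δ) ^ ((1 : ℝ) / d) ≤ 1 :=
    Real.rpow_le_one hδ'.le (by linarith) (by positivity)
  refine ⟨?_, by rw [div_lt_iff₀ hp, mul_comm]; exact hKδ⟩
  -- positivity of ‖x‖
  have hM : 0 < R' / (K - 1) := div_pos hR' (by linarith)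
  have hx0 : 0 < ‖x‖ := lt_trans (lt_of_lt_of_le hM (le_max_left _ _)) hx
  -- d = 0 is impossible? no, x ≠ 0 forces d > 0
  rcases Nat.eq_zero_or_pos d with hd | hd
  · exfalso
    subst hd
    have : x = 0 := Subsingleton.elim x 0
    rw [this, norm_zero] at hx0
    exact lt_irrefl _ hx0
  haveI : Nontrivial (EuclideanSpace ℝ (Fin d)) :=
    ⟨0, EuclideanSpace.single ⟨0, hd⟩ 1, by
      intro h
      have := congrArg (fun v => v ⟨0, hd⟩) h.symm
      simp at this⟩
  set I := ∫ y, |f y| with hIdef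
  have hI : 0 < I := by
    rcases lt_or_eq_of_le (integral_nonneg (f := fun y => |f y|) (fun y => abs_nonneg (f y))) with h | h
    · exact h
    · exfalso
      apply hf0
      have := (integral_eq_zero_iff_of_nonneg (f := fun y => |f y|) (fun y => abs_nonneg (f y)) hf.abs).mp h.symm
      filter_upwards [this] with y hy
      simpa using hy
  set v1 := (volume (Metric.ball (0 : EuclideanSpace ℝ (Fin d)) 1)).toReal with hv1def
  have hv1 : 0 < v1 :=
    ENNReal.toReal_pos (Metric.measure_ball_pos volume 0 one_pos).ne' measure_ball_lt_top.ne
  have hvol : ∀ r : ℝ, 0 ≤ r → (volume (Metric.ball x r)).toReal = r ^ d * v1 := by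
    intro r hr
    rw [Measure.addHaar_ball volume x hr, finrank_euclideanSpace_fin]
    rw [ENNReal.toReal_mul, ENNReal.toReal_ofReal (by positivity)]
  set R := ‖x‖ + R' with hRdef
  have hR0 : 0 < R := by positivity
  -- inclusion of balls
  have hsub : Metric.ball (0 : EuclideanSpace ℝ (Fin d)) R' ⊆ Metric.ball x R := by
    intro y hy
    rw [Metric.mem_ball] at hy ⊢
    calc dist y x ≤ dist y 0 + dist 0 x := dist_triangle _ _ _
      _ < R' + ‖x‖ := by
          rw [dist_zero_left]
          have : dist y 0 = ‖y‖ := by rw [dist_zero_right]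
          rw [this] at hy
          linarith [norm_nonneg x]
      _ = R := by rw [hRdef]; ring
  have hmono : ∫ y in Metric.ball (0 : EuclideanSpace ℝ (Fin d)) R', |f y| ≤
      ∫ y in Metric.ball x R, |f y| :=
    setIntegral_mono_set hf.abs.integrableOn
      (Filter.Eventually.of_forall fun y => abs_nonneg _)
      (HasSubset.Subset.eventuallyLE hsub)
  have hRint : (1 - δ) * I ≤ ∫ y in Metric.ball x R, |f y| := le_trans hmass hmono
  have hle : ∀ s : Set (EuclideanSpace ℝ (Fin d)), ∫ y in s, |f y| ≤ I := fun s =>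
    setIntegral_le_integral hf.abs (Filter.Eventually.of_forall fun y => abs_nonneg _)
  -- key bound on elements of the set
  have key : ∀ r : ℝ, 0 < r → contMax d f x = contAvg d f r x →
      r ≤ R / (1 - δ) ^ ((1 : ℝ) / d) := by
    intro r hr hav
    have hpowd : ((1 - δ) ^ ((1 : ℝ) / d)) ^ d = 1 - δ := by
      rw [← Real.rpow_natCast ((1 - δ) ^ ((1 : ℝ) / d)) d, ← Real.rpow_mul hδ'.le]
      rw [one_div, inv_mul_cancel₀ (by exact_mod_cast hd.ne'), Real.rpow_one]
    have main : (1 - δ) * r ^ d ≤ R ^ d := by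
      by_cases hb : BddAbove ((fun r => contAvg d f r x) '' Set.Ioi (0 : ℝ))
      · have hMge : contAvg d f R x ≤ contMax d f x :=
          le_csSup hb ⟨R, hR0, rfl⟩
        rw [hav] at hMge
        unfold contAvg at hMge
        rw [hvol r hr.le, hvol R hR0.le] at hMge
        rw [div_le_div_iff₀ (by positivity) (by positivity)] at hMge
        -- (∫_R) * (r^d v1) ≤ (∫_r) * (R^d v1)
        have h1 : (1 - δ) * I ≤ ∫ y in Metric.ball x R, |f y| := hRint
        have h2 : ∫ y in Metric.ball x r, |f y| ≤ I := hle _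
        have hrd : (0:ℝ) < r ^ d := by positivity
        have a1 : (1 - δ) * I * (r ^ d * v1) ≤
            (∫ y in Metric.ball x R, |f y|) * (r ^ d * v1) :=
          mul_le_mul_of_nonneg_right h1 (by positivity)
        have a2 : (∫ y in Metric.ball x r, |f y|) * (R ^ d * v1) ≤ I * (R ^ d * v1) :=
          mul_le_mul_of_nonneg_right h2 (by positivity)
        have a3 : (1 - δ) * I * (r ^ d * v1) ≤ I * (R ^ d * v1) :=
          le_trans a1 (le_trans hMge a2)
        nlinarith [mul_pos hI hv1]
      · have hM0 : contMax d f x = 0 := Real.sSup_of_not_bddAbove hb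
        have hint0 : ∫ y in Metric.ball x r, |f y| = 0 := by
          have := hav.symm.trans hM0
          unfold contAvg at this
          rw [hvol r hr.le] at this
          rcases div_eq_zero_iff.mp this with h | h
          · exact h
          · exact absurd h (by positivity)
        have hrR : r < R := by
          by_contra hcon
          push_neg at hcon
          have hsub2 : Metric.ball x R ⊆ Metric.ball x r := Metric.ball_subset_ball hcon
          have : ∫ y in Metric.ball x R, |f y| ≤ ∫ y in Metric.ball x r, |f y| :=
            setIntegral_mono_set hf.abs.integrableOn
              (Filter.Eventually.of_forall fun y => abs_nonneg _)
              (HasSubset.Subset.eventuallyLE hsub2)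
          nlinarith
        have h1 : r ^ d ≤ R ^ d := pow_le_pow_left₀ hr.le hrR.le d
        nlinarith [pow_pos hr d]
    -- conclude r ≤ R / p
    rw [le_div_iff₀ hp]
    have hgoal : (r * (1 - δ) ^ ((1 : ℝ) / d)) ^ d ≤ R ^ d := by
      rw [mul_pow, hpowd, mul_comm]
      exact main
    exact le_of_pow_le_pow_left₀ hd.ne' hR0.le hgoal
  -- from key bound to the conclusion
  have hRK : R ≤ K * ‖x‖ := by
    have h1 : R' / (K - 1) < ‖x‖ := lt_of_le_of_lt (le_max_left _ _) hx
    have h2 : R' < ‖x‖ * (K - 1) := (div_lt_iff₀ (by linarith)).mp h1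
    rw [hRdef]; linarith
  have hbound : contFreq d f x ≤ R / (1 - δ) ^ ((1 : ℝ) / d) := by
    unfold contFreq
    rcases Set.eq_empty_or_nonempty {r : ℝ | 0 < r ∧ contMax d f x = contAvg d f r x} with he | ⟨r, hr⟩
    · rw [he, Real.sInf_empty]
      positivity
    · exact csInf_le_of_le ⟨0, fun y hy => hy.1.le⟩ hr (key r hr.1 hr.2)
  rw [div_le_div_iff₀ hx0 hp]
  calc contFreq d f x * (1 - δ) ^ ((1 : ℝ) / d)
      ≤ (R / (1 - δ) ^ ((1 : ℝ) / d)) * (1 - δ) ^ ((1 : ℝ) / d) :=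
        mul_le_mul_of_nonneg_right hbound hp.le
    _ = R := by field_simp
    _ ≤ K * ‖x‖ := hRK
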